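/- Lemma 5.8 (closed-form optimal solution of the worst-case instance): Let 𝒬 > 1, κ = (√𝒬 + 3)/(√𝒬 + 1), q = (√𝒬 − 1)/(√𝒬 + 1), and let A ∈ ℝ^{ñ×ñ} be the tridiagonal matrix with A_{jj} = 2 for j < ñ, A_{ññ} = κ, and A_{j,j+1} = A_{j+1,j} = −1. Then the vector v ∈ ℝ^ñ with entries v_j = q^j satisfies (A + (4/(𝒬−1))·I)·v = e₁; consequently, for μ > 0, the block vector x* with x*_{i,j} = q^j (i = 1, …, m; j = 1, …, ñ) is the unique optimal solution of min_{x} Σ_{i=1}^m [(μ(𝒬−1)/4)(½⟨A x_i, x_i⟩ − ⟨e₁, x_i⟩) + (μ/2)‖x_i‖₂²]. -/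

import Mathlib

open Finset

lemma sum_if_coe {n : ℕ} (t : ℕ) (g : Fin n → ℝ) :
    ∑ k : Fin n, (if (k : ℕ) = t then g k else 0)
      = if h : t < n then g ⟨t, h⟩ else 0 := by
  by_cases h : t < n
  · rw [dif_pos h, Finset.sum_eq_single (⟨t, h⟩ : Fin n)]
    · simp
    · intro b _ hb
      rw [if_neg]
      intro hbt
      exact hb (Fin.ext hbt)
    · simp
  · rw [dif_neg h]
    apply Finset.sum_eq_zero
    intro k _
    rw [if_neg]
    omega

lemma mulVec_formula {n : ℕ} (κ : ℝ)
    (A : Matrix (Fin n) (Fin n) ℝ)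
    (hA : ∀ i j : Fin n, A i j =
      if i = j then (if (i : ℕ) = n - 1 then κ else 2)
      else if (i : ℕ) + 1 = (j : ℕ) ∨ (j : ℕ) + 1 = (i : ℕ) then -1 else 0)
    (w : Fin n → ℝ) (j : Fin n) :
    A.mulVec w j =
      (if (j : ℕ) = n - 1 then κ else 2) * w j
      - (if h : (j : ℕ) + 1 < n then w ⟨(j : ℕ) + 1, h⟩ else 0)
      - (if (j : ℕ) = 0 then 0
         else if h : (j : ℕ) - 1 < n then w ⟨(j : ℕ) - 1, h⟩ else 0) := by
  have hsplit : ∀ k : Fin n, A j k * w k =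
      (if k = j then (if (j : ℕ) = n - 1 then κ else 2) * w k else 0)
      + (if (k : ℕ) = (j : ℕ) + 1 then -w k else 0)
      + (if (j : ℕ) ≠ 0 ∧ (k : ℕ) = (j : ℕ) - 1 then -w k else 0) := by
    intro k
    have hjk := j.isLt
    have hkk := k.isLt
    rw [hA]
    simp only [Fin.ext_iff, ne_eq]
    split_ifs <;> first | ring1 | (exfalso; omega)
  show ∑ k, A j k * w k = _
  rw [Finset.sum_congr rfl (fun k _ => hsplit k), Finset.sum_add_distrib,
    Finset.sum_add_distrib, Finset.sum_ite_eq' Finset.univ j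
      (fun k => (if (j : ℕ) = n - 1 then κ else 2) * w k)]
  simp only [Finset.mem_univ, if_true]
  rw [sum_if_coe ((j : ℕ) + 1) (fun k => -w k)]
  by_cases hj0 : (j : ℕ) = 0
  · have h3 : ∀ k : Fin n,
        (if (j : ℕ) ≠ 0 ∧ (k : ℕ) = (j : ℕ) - 1 then -w k else 0) = 0 := by
      intro k; rw [if_neg]; simp [hj0]
    rw [Finset.sum_congr rfl (fun k _ => h3 k), Finset.sum_const_zero, if_pos hj0]
    by_cases h : (j : ℕ) + 1 < n <;> simp [h] <;> ring
  · have h3 : ∀ k : Fin n,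
        (if (j : ℕ) ≠ 0 ∧ (k : ℕ) = (j : ℕ) - 1 then -w k else 0)
        = (if (k : ℕ) = (j : ℕ) - 1 then -w k else 0) := by
      intro k
      by_cases h : (k : ℕ) = (j : ℕ) - 1
      · rw [if_pos ⟨hj0, h⟩, if_pos h]
      · rw [if_neg (fun hh => h hh.2), if_neg h]
    rw [Finset.sum_congr rfl (fun k _ => h3 k),
      sum_if_coe ((j : ℕ) - 1) (fun k => -w k), if_neg hj0]
    by_cases h1 : (j : ℕ) + 1 < n <;> by_cases h2 : (j : ℕ) - 1 < n <;>
      simp [h1, h2] <;> ring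

lemma block_identity {n : ℕ} (A : Matrix (Fin n) (Fin n) ℝ)
    (hsym : ∀ i j, A i j = A j i) (c β μc : ℝ) (hμc : μc = c * β)
    (e1 v : Fin n → ℝ)
    (hMv : ∀ j, A.mulVec v j + β * v j = e1 j) (y : Fin n → ℝ) :
    c * ((1 / 2) * ∑ j, A.mulVec y j * y j - ∑ j, e1 j * y j)
      + μc / 2 * ∑ j, (y j) ^ 2
    = (c * ((1 / 2) * ∑ j, A.mulVec v j * v j - ∑ j, e1 j * v j)
      + μc / 2 * ∑ j, (v j) ^ 2)
      + c / 2 * ∑ j, A.mulVec (fun k => y k - v k) j * (y j - v j)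
      + μc / 2 * ∑ j, (y j - v j) ^ 2 := by
  have hmv : ∀ j, A.mulVec (fun k => y k - v k) j = A.mulVec y j - A.mulVec v j := by
    intro j
    simp only [Matrix.mulVec, dotProduct, mul_sub, Finset.sum_sub_distrib]
  have hcross : ∑ j, A.mulVec y j * v j = ∑ j, A.mulVec v j * y j := by
    simp only [Matrix.mulVec, dotProduct, Finset.sum_mul]
    rw [Finset.sum_comm]
    apply Finset.sum_congr rfl
    intro k _
    apply Finset.sum_congr rfl
    intro j _
    rw [hsym j k]
    ring
  have hS7 : ∑ j, A.mulVec (fun k => y k - v k) j * (y j - v j)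
      = ∑ j, A.mulVec y j * y j - ∑ j, A.mulVec y j * v j
        - ∑ j, A.mulVec v j * y j + ∑ j, A.mulVec v j * v j := by
    rw [← Finset.sum_sub_distrib, ← Finset.sum_sub_distrib, ← Finset.sum_add_distrib]
    apply Finset.sum_congr rfl
    intro j _
    rw [hmv j]
    ring
  have hS8 : ∑ j, (y j - v j) ^ 2
      = ∑ j, (y j) ^ 2 - 2 * ∑ j, v j * y j + ∑ j, (v j) ^ 2 := by
    rw [Finset.mul_sum, ← Finset.sum_sub_distrib, ← Finset.sum_add_distrib]
    apply Finset.sum_congr rfl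
    intro j _
    ring
  have hEy : ∑ j, e1 j * y j = ∑ j, A.mulVec v j * y j + β * ∑ j, v j * y j := by
    rw [Finset.mul_sum, ← Finset.sum_add_distrib]
    apply Finset.sum_congr rfl
    intro j _
    rw [← hMv j]
    ring
  have hEv : ∑ j, e1 j * v j = ∑ j, A.mulVec v j * v j + β * ∑ j, (v j) ^ 2 := by
    rw [Finset.mul_sum, ← Finset.sum_add_distrib]
    apply Finset.sum_congr rfl
    intro j _
    rw [← hMv j]
    ring
  rw [hS7, hS8, hEy, hEv, hcross, hμc]
  ring
lemma quad_nonneg {n : ℕ} (hn : 1 ≤ n) (κ : ℝ) (hκ1 : 1 ≤ κ)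
    (A : Matrix (Fin n) (Fin n) ℝ)
    (hA : ∀ i j : Fin n, A i j =
      if i = j then (if (i : ℕ) = n - 1 then κ else 2)
      else if (i : ℕ) + 1 = (j : ℕ) ∨ (j : ℕ) + 1 = (i : ℕ) then -1 else 0)
    (w : Fin n → ℝ) :
    0 ≤ ∑ j : Fin n, A.mulVec w j * w j := by
  obtain ⟨p, rfl⟩ : ∃ p, n = p + 1 := ⟨n - 1, (Nat.succ_pred_eq_of_pos hn).symm⟩
  set W : ℕ → ℝ := fun k => if h : k < p + 1 then w ⟨k, h⟩ else 0 with hW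
  have hWj : ∀ j : Fin (p + 1), W (j : ℕ) = w j := by
    intro j; simp [hW]; intro h; have := j.isLt; omega
  have hWtop : W (p + 1) = 0 := by simp [hW]
  set G : ℕ → ℝ := fun k =>
    ((if k = p then κ else 2) * W k - W (k + 1)
      - (if k = 0 then 0 else W (k - 1))) * W k with hG
  have h1 : ∑ j : Fin (p + 1), A.mulVec w j * w j = ∑ k ∈ range (p + 1), G k := by
    rw [← Fin.sum_univ_eq_sum_range G (p + 1)]
    apply Finset.sum_congr rfl
    intro j _
    rw [mulVec_formula κ A hA w j, hG]
    simp only [Nat.add_sub_cancel]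
    rw [hWj j]
  have h2 : ∀ k, G k = (if k = p then κ else 2) * W k * W k
      - W (k + 1) * W k - (if k = 0 then 0 else W (k - 1)) * W k := by
    intro k; rw [hG]; ring
  have h3 : ∑ k ∈ range (p + 1), G k
      = ∑ k ∈ range (p + 1), (if k = p then κ else 2) * W k * W k
        - ∑ k ∈ range (p + 1), W (k + 1) * W k
        - ∑ k ∈ range (p + 1), (if k = 0 then 0 else W (k - 1)) * W k := by
    rw [← Finset.sum_sub_distrib, ← Finset.sum_sub_distrib]
    exact Finset.sum_congr rfl (fun k _ => h2 k)
  have hd : ∑ k ∈ range (p + 1), (if k = p then κ else 2) * W k * W k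
      = ∑ k ∈ range p, 2 * W k * W k + κ * W p * W p := by
    rw [Finset.sum_range_succ, if_pos rfl]
    congr 1
    apply Finset.sum_congr rfl
    intro k hk
    rw [if_neg (by simp at hk; omega)]
  have hup : ∑ k ∈ range (p + 1), W (k + 1) * W k
      = ∑ k ∈ range p, W (k + 1) * W k := by
    rw [Finset.sum_range_succ, hWtop]; ring
  have hdn : ∑ k ∈ range (p + 1), (if k = 0 then 0 else W (k - 1)) * W k
      = ∑ k ∈ range p, W k * W (k + 1) := by
    rw [Finset.sum_range_succ']
    simp only [Nat.add_sub_cancel]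
    have h0 : ∀ k ∈ range p, (if k + 1 = 0 then (0:ℝ) else W k) * W (k + 1)
        = W k * W (k + 1) := fun k _ => by rw [if_neg (by omega)]
    rw [Finset.sum_congr rfl h0]
    simp
  have hsq : ∑ k ∈ range p, (W k - W (k + 1)) ^ 2
      = ∑ k ∈ range p, W k * W k - 2 * ∑ k ∈ range p, W k * W (k + 1)
        + ∑ k ∈ range p, W (k + 1) * W (k + 1) := by
    rw [Finset.mul_sum, ← Finset.sum_sub_distrib, ← Finset.sum_add_distrib]
    apply Finset.sum_congr rfl
    intro k _; ring
  have hshift : ∑ k ∈ range p, W (k + 1) * W (k + 1)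
      = ∑ k ∈ range p, W k * W k + W p * W p - W 0 * W 0 := by
    have := Finset.sum_range_succ' (fun k => W k * W k) p
    have h2 := Finset.sum_range_succ (fun k => W k * W k) p
    rw [h2] at this
    linarith
  have hfinal : ∑ k ∈ range (p + 1), G k
      = W 0 * W 0 + (κ - 1) * (W p * W p)
        + ∑ k ∈ range p, (W k - W (k + 1)) ^ 2 := by
    rw [h3, hd, hup, hdn, hsq, hshift]
    have : ∑ k ∈ range p, W (k + 1) * W k = ∑ k ∈ range p, W k * W (k + 1) :=
      Finset.sum_congr rfl (fun k _ => by ring)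
    rw [this, show ∑ k ∈ range p, 2 * W k * W k = 2 * ∑ k ∈ range p, W k * W k from
      by rw [Finset.mul_sum]; exact Finset.sum_congr rfl (fun k _ => by ring)]
    ring
  rw [h1, hfinal]
  have hs : 0 ≤ ∑ k ∈ range p, (W k - W (k + 1)) ^ 2 :=
    Finset.sum_nonneg (fun k _ => sq_nonneg _)
  nlinarith [mul_self_nonneg (W 0), mul_self_nonneg (W p)]

/-- Lemma 5.8 -/
theorem worst_case_optimal_solution
    (ntil m : ℕ) (hn : 1 ≤ ntil) (hm : 1 ≤ m)
    (Q μ : ℝ) (hQ : 1 < Q) (hμ : 0 < μ)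
    (κ q : ℝ)
    (hκ : κ = (Real.sqrt Q + 3) / (Real.sqrt Q + 1))
    (hq : q = (Real.sqrt Q - 1) / (Real.sqrt Q + 1))
    (A : Matrix (Fin ntil) (Fin ntil) ℝ)
    (hA : ∀ i j : Fin ntil, A i j =
      if i = j then (if (i : ℕ) = ntil - 1 then κ else 2)
      else if (i : ℕ) + 1 = (j : ℕ) ∨ (j : ℕ) + 1 = (i : ℕ) then -1 else 0)
    (e1 : Fin ntil → ℝ) (he1 : ∀ j : Fin ntil, e1 j = if (j : ℕ) = 0 then 1 else 0)
    (v : Fin ntil → ℝ) (hv : ∀ j, v j = q ^ ((j : ℕ) + 1))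
    (Φ : (Fin m → Fin ntil → ℝ) → ℝ)
    (hΦ : ∀ x, Φ x = ∑ i, (μ * (Q - 1) / 4 *
        ((1 / 2) * ∑ j, A.mulVec (x i) j * x i j - ∑ j, e1 j * x i j)
      + μ / 2 * ∑ j, (x i j) ^ 2))
    (xstar : Fin m → Fin ntil → ℝ) (hxstar : ∀ i j, xstar i j = q ^ ((j : ℕ) + 1)) :
    (A + (4 / (Q - 1)) • (1 : Matrix (Fin ntil) (Fin ntil) ℝ)).mulVec v = e1
    ∧ (∀ u, Φ xstar ≤ Φ u)
    ∧ (∀ u, u ≠ xstar → Φ xstar < Φ u) := by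
  set s : ℝ := Real.sqrt Q with hs
  have hs0 : 0 ≤ s := Real.sqrt_nonneg Q
  have hsq : s ^ 2 = Q := Real.sq_sqrt (by linarith)
  have hs1 : 1 < s := by nlinarith
  have hQ1 : (0:ℝ) < Q - 1 := by linarith
  set β : ℝ := 4 / (Q - 1) with hβ
  have hβ0 : 0 < β := by positivity
  have hd1 : s + 1 ≠ 0 := by positivity
  have hd2 : s - 1 ≠ 0 := by intro h; nlinarith
  have hd3 : Q - 1 ≠ 0 := ne_of_gt hQ1
  have hq2 : (2 + β) * q = 1 + q ^ 2 := by
    rw [hβ, hq, ← hsq]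
    have : s ^ 2 - 1 ≠ 0 := by nlinarith
    field_simp
    ring
  have hκq : (κ + β) * q = 1 := by
    rw [hβ, hκ, hq, ← hsq]
    have : s ^ 2 - 1 ≠ 0 := by nlinarith
    field_simp
    ring
  have hκ1 : 1 ≤ κ := by
    rw [hκ, le_div_iff₀ (by linarith)]
    linarith
  -- Part 1 (pointwise)
  have hMv : ∀ j, A.mulVec v j + β * v j = e1 j := by
    intro j
    rw [mulVec_formula κ A hA v j, he1 j]
    simp only [hv]
    by_cases hlast : (j : ℕ) = ntil - 1
    · rw [if_pos hlast, dif_neg (by have := j.isLt; omega : ¬((j : ℕ) + 1 < ntil))]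
      by_cases hj0 : (j : ℕ) = 0
      · rw [if_pos hj0, if_pos hj0, hj0]
        linear_combination hκq
      · rw [if_neg hj0, if_neg hj0, dif_pos (by have := j.isLt; omega : (j : ℕ) - 1 < ntil)]
        obtain ⟨k, hk⟩ : ∃ k, (j : ℕ) = k + 1 := ⟨(j : ℕ) - 1, by omega⟩
        rw [hk]
        simp only [Nat.add_sub_cancel]
        linear_combination q ^ (k + 1) * hκq
    · rw [if_neg hlast, dif_pos (by have := j.isLt; omega : (j : ℕ) + 1 < ntil)]
      by_cases hj0 : (j : ℕ) = 0
      · rw [if_pos hj0, if_pos hj0, hj0]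
        linear_combination hq2
      · rw [if_neg hj0, if_neg hj0, dif_pos (by have := j.isLt; omega : (j : ℕ) - 1 < ntil)]
        obtain ⟨k, hk⟩ : ∃ k, (j : ℕ) = k + 1 := ⟨(j : ℕ) - 1, by omega⟩
        rw [hk]
        simp only [Nat.add_sub_cancel]
        linear_combination q ^ (k + 1) * hq2
  have part1 : (A + β • (1 : Matrix (Fin ntil) (Fin ntil) ℝ)).mulVec v = e1 := by
    funext j
    rw [Matrix.add_mulVec, Matrix.smul_mulVec, Matrix.one_mulVec]
    simpa using hMv j
  -- symmetry
  have hsym : ∀ i j, A i j = A j i := by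
    intro i j
    rw [hA, hA]
    rcases eq_or_ne i j with rfl | h
    · rfl
    · rw [if_neg h, if_neg (Ne.symm h)]
      by_cases h2 : (i : ℕ) + 1 = (j : ℕ) ∨ (j : ℕ) + 1 = (i : ℕ)
      · rw [if_pos h2, if_pos (Or.symm h2)]
      · rw [if_neg h2, if_neg (fun hh => h2 (Or.symm hh))]
  set c : ℝ := μ * (Q - 1) / 4 with hc
  have hc0 : 0 < c := by positivity
  have hμc : μ = c * β := by
    rw [hc, hβ]
    field_simp
  have hxv : ∀ i, xstar i = v := by
    intro i; funext j; rw [hxstar, hv]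
  -- per-block comparison
  have hblock : ∀ y : Fin ntil → ℝ,
      c * ((1 / 2) * ∑ j, A.mulVec y j * y j - ∑ j, e1 j * y j)
        + μ / 2 * ∑ j, (y j) ^ 2
      = (c * ((1 / 2) * ∑ j, A.mulVec v j * v j - ∑ j, e1 j * v j)
        + μ / 2 * ∑ j, (v j) ^ 2)
        + c / 2 * ∑ j, A.mulVec (fun k => y k - v k) j * (y j - v j)
        + μ / 2 * ∑ j, (y j - v j) ^ 2 :=
    block_identity A hsym c β μ hμc e1 v hMv
  have hQf : ∀ y : Fin ntil → ℝ,
      0 ≤ ∑ j, A.mulVec (fun k => y k - v k) j * (y j - v j) := by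
    intro y
    exact quad_nonneg hn κ hκ1 A hA (fun k => y k - v k)
  have hle : ∀ u : Fin m → Fin ntil → ℝ, ∀ i : Fin m,
      c * ((1 / 2) * ∑ j, A.mulVec (xstar i) j * xstar i j - ∑ j, e1 j * xstar i j)
        + μ / 2 * ∑ j, (xstar i j) ^ 2
      ≤ c * ((1 / 2) * ∑ j, A.mulVec (u i) j * u i j - ∑ j, e1 j * u i j)
        + μ / 2 * ∑ j, (u i j) ^ 2 := by
    intro u i
    rw [hxv i, hblock (u i)]
    have h1 := hQf (u i)
    have h2 : (0:ℝ) ≤ ∑ j, (u i j - v j) ^ 2 :=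
      Finset.sum_nonneg (fun j _ => sq_nonneg _)
    nlinarith
  refine ⟨part1, ?_, ?_⟩
  · intro u
    rw [hΦ u, hΦ xstar]
    exact Finset.sum_le_sum (fun i _ => hle u i)
  · intro u hne
    rw [hΦ u, hΦ xstar]
    apply Finset.sum_lt_sum (fun i _ => hle u i)
    have : ∃ i, u i ≠ xstar i := by
      by_contra h
      push_neg at h
      exact hne (funext h)
    obtain ⟨i, hi⟩ := this
    have : ∃ j, u i j ≠ xstar i j := by
      by_contra h
      push_neg at h
      exact hi (funext h)
    obtain ⟨j0, hj0⟩ := this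
    refine ⟨i, Finset.mem_univ i, ?_⟩
    rw [hxv i, hblock (u i)]
    have h1 := hQf (u i)
    have h2 : (0:ℝ) < ∑ j, (u i j - v j) ^ 2 := by
      apply Finset.sum_pos' (fun j _ => sq_nonneg _)
      refine ⟨j0, Finset.mem_univ j0, ?_⟩
      have : u i j0 - v j0 ≠ 0 := by
        rw [hv]
        rw [hxstar] at hj0
        intro h
        exact hj0 (by linarith)
      positivity
    nlinarith
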